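/- Let n ≥ 0 be an even integer, a : {1,…,n} → ℕ, and C = (Σ_{i=1}^n a_i)/2. Consider the robust max-min-max knapsack problem with feasible set X = { x ∈ {0,1}^n : Σ_i a_i x_i ≤ C }, profits c_i = 1 − n·δ_i for δ ∈ {0,1}^n with Σ_i δ_i ≤ 1 (i.e. nominal profits ĉ_i = 1, deviations d_i = −n, budget Γ = 1), and K = 2 solutions. Then max over (x^1,x^2) ∈ X² of min over admissible δ of max(Σ_i (1−n·δ_i)x^1_i, Σ_i (1−n·δ_i)x^2_i) is at least n/2 if and only if there exists a subset I ⊆ {1,…,n} with |I| = n/2 and Σ_{i∈I} a_i = Σ_{i∉I} a_i. -/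
import Mathlib


open Finset

lemma sum_profit (n : ℕ) (x D : Finset (Fin n)) :
    ∑ i ∈ x, ((1 : ℝ) - n * (if i ∈ D then 1 else 0)) = (x.card : ℝ) - n * ((x ∩ D).card) := by
  rw [Finset.sum_sub_distrib, Finset.sum_const, nsmul_eq_mul, mul_one, ← Finset.mul_sum]
  congr 2
  rw [Finset.sum_ite_mem]
  simp

lemma card_big (n : ℕ) (hn : 0 < n) (x y : Finset (Fin n))
    (hk : ∀ D : Finset (Fin n), D.card ≤ 1 →
      (n:ℝ)/2 ≤ max ((x.card:ℝ) - n * ((x ∩ D).card)) ((y.card:ℝ) - n * ((y ∩ D).card))) :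
    (n:ℝ)/2 ≤ x.card := by
  have hnR : (0:ℝ) < n := by exact_mod_cast hn
  rcases y.eq_empty_or_nonempty with h | ⟨j, hj⟩
  · have := hk ∅ (by simp)
    simpa [h] using this
  · have hkey := hk {j} (by simp)
    have hycard : (y.card : ℝ) ≤ n := by
      have := Finset.card_le_univ y
      have h2 : y.card ≤ n := by simpa using this
      exact_mod_cast h2
    have hy : (y.card:ℝ) - n * ((y ∩ {j}).card) ≤ 0 := by
      rw [Finset.inter_singleton_of_mem hj, Finset.card_singleton, Nat.cast_one, mul_one]
      linarith
    have hx' : (n:ℝ)/2 ≤ (x.card:ℝ) - n * ((x ∩ {j}).card) := by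
      rcases le_max_iff.mp hkey with h' | h'
      · exact h'
      · linarith
    have hpos : (0:ℝ) ≤ n * ((x ∩ {j}).card) := by positivity
    linarith


/-- correctness of the reduction from the equipartition problem to
the robust max-min-max knapsack problem with weights `a`, capacity
`C = (∑ a)/2`, nominal profits `1`, deviations `-n`, budget `Γ = 1` and `K = 2`. -/
theorem equipartition_knapsack_reduction (n : ℕ) (hneven : Even n)
    (a : Fin n → ℕ) (C : ℝ) (hC : C = (∑ i, (a i : ℝ)) / 2) :
    (n : ℝ) / 2 ≤
      (((Finset.univ.filter fun x : Finset (Fin n) => (∑ i ∈ x, (a i : ℝ)) ≤ C) ×ˢ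
          (Finset.univ.filter fun x : Finset (Fin n) => (∑ i ∈ x, (a i : ℝ)) ≤ C)).sup'
        (Finset.Nonempty.product
          ⟨∅, Finset.mem_filter.mpr ⟨Finset.mem_univ _, by rw [hC]; simp; positivity⟩⟩
          ⟨∅, Finset.mem_filter.mpr ⟨Finset.mem_univ _, by rw [hC]; simp; positivity⟩⟩)
        fun p => (Finset.univ.powerset.filter fun D : Finset (Fin n) => D.card ≤ 1).inf'
          ⟨∅, by simp⟩
          fun D => max
            (∑ i ∈ p.1, ((1 : ℝ) - n * (if i ∈ D then 1 else 0)))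
            (∑ i ∈ p.2, ((1 : ℝ) - n * (if i ∈ D then 1 else 0)))) ↔
    ∃ I : Finset (Fin n), I.card = n / 2 ∧ ∑ i ∈ I, a i = ∑ i ∈ Iᶜ, a i := by
  obtain ⟨m, hm⟩ := hneven
  constructor
  · intro h
    rcases Nat.eq_zero_or_pos n with hn | hn
    · subst hn
      exact ⟨∅, by simp, by simp⟩
    rw [Finset.le_sup'_iff] at h
    obtain ⟨p, hp, hF⟩ := h
    rw [Finset.mem_product, Finset.mem_filter, Finset.mem_filter] at hp
    obtain ⟨⟨-, h1⟩, -, h2⟩ := hp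
    have key : ∀ D : Finset (Fin n), D.card ≤ 1 →
        (n:ℝ)/2 ≤ max ((p.1.card : ℝ) - n * ((p.1 ∩ D).card))
          ((p.2.card:ℝ) - n * ((p.2 ∩ D).card)) := by
      intro D hD
      have hmem : D ∈ Finset.univ.powerset.filter fun D : Finset (Fin n) => D.card ≤ 1 := by
        simp [hD]
      have hle := Finset.inf'_le
        (fun D => max (∑ i ∈ p.1, ((1 : ℝ) - n * (if i ∈ D then 1 else 0)))
          (∑ i ∈ p.2, ((1 : ℝ) - n * (if i ∈ D then 1 else 0)))) hmem
      rw [sum_profit, sum_profit] at hle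
      exact le_trans hF hle
    have hnR : (0:ℝ) < n := by exact_mod_cast hn
    -- disjointness
    have hdisj : Disjoint p.1 p.2 := by
      rw [Finset.disjoint_left]
      intro j hj1 hj2
      have hkey := key {j} (by simp)
      rw [Finset.inter_singleton_of_mem hj1, Finset.inter_singleton_of_mem hj2] at hkey
      have hc1 : (p.1.card : ℝ) ≤ n := by exact_mod_cast (by simpa using Finset.card_le_univ p.1 : p.1.card ≤ n)
      have hc2 : (p.2.card : ℝ) ≤ n := by exact_mod_cast (by simpa using Finset.card_le_univ p.2 : p.2.card ≤ n)
      simp only [Finset.card_singleton, Nat.cast_one, mul_one] at hkey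
      rcases le_max_iff.mp hkey with h' | h' <;> linarith
    have hc1 : (n:ℝ)/2 ≤ p.1.card := card_big n hn p.1 p.2 key
    have hc2 : (n:ℝ)/2 ≤ p.2.card :=
      card_big n hn p.2 p.1 (fun D hD => by rw [max_comm]; exact key D hD)
    have hsumc : p.1.card + p.2.card ≤ n := by
      rw [← Finset.card_union_of_disjoint hdisj]
      simpa using Finset.card_le_univ (p.1 ∪ p.2)
    have hsumcR : (p.1.card : ℝ) + p.2.card ≤ n := by exact_mod_cast hsumc
    have c1R : (p.1.card : ℝ) = n/2 := by linarith
    have c2R : (p.2.card : ℝ) = n/2 := by linarith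
    have mhalf : ((m:ℝ)) = (n:ℝ)/2 := by
      have : (n:ℝ) = m + m := by exact_mod_cast congrArg (Nat.cast (R := ℝ)) hm
      linarith
    have card1 : p.1.card = m := by
      have : (p.1.card : ℝ) = m := by rw [c1R, mhalf]
      exact_mod_cast this
    have card2 : p.2.card = m := by
      have : (p.2.card : ℝ) = m := by rw [c2R, mhalf]
      exact_mod_cast this
    have hsub : p.2 ⊆ p.1ᶜ := by
      intro j hj
      rw [Finset.mem_compl]
      exact fun h1 => Finset.disjoint_left.mp hdisj h1 hj
    have hcomplcard : p.1ᶜ.card = m := by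
      rw [Finset.card_compl, card1]
      simp only [Fintype.card_fin]
      omega
    have heq : p.2 = p.1ᶜ :=
      Finset.eq_of_subset_of_card_le hsub (by rw [hcomplcard, card2])
    rw [heq] at h2
    have htot : ∑ i ∈ p.1, (a i:ℝ) + ∑ i ∈ p.1ᶜ, (a i:ℝ) = ∑ i, (a i:ℝ) :=
      Finset.sum_add_sum_compl _ _
    rw [hC] at h1 h2
    have hs : ∑ i ∈ p.1, (a i:ℝ) = ∑ i ∈ p.1ᶜ, (a i:ℝ) := by linarith
    refine ⟨p.1, by omega, ?_⟩
    exact_mod_cast hs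
  · rintro ⟨I, hcard, hsum⟩
    have hmhalf : n / 2 = m := by omega
    rw [hmhalf] at hcard
    have htotN : ∑ i ∈ I, a i + ∑ i ∈ Iᶜ, a i = ∑ i, a i := Finset.sum_add_sum_compl _ _
    have h2 : (∑ i ∈ I, a i) * 2 = ∑ i, a i := by omega
    have h2R : (∑ i ∈ I, (a i:ℝ)) * 2 = ∑ i, (a i:ℝ) := by exact_mod_cast h2
    have hIr : ∑ i ∈ I, (a i : ℝ) = C := by rw [hC]; linarith
    have hIcr : ∑ i ∈ Iᶜ, (a i : ℝ) = C := by
      have : ∑ i ∈ I, (a i:ℝ) + ∑ i ∈ Iᶜ, (a i:ℝ) = ∑ i, (a i:ℝ) :=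
        Finset.sum_add_sum_compl _ _
      rw [hC]; linarith
    have hmem : (I, Iᶜ) ∈
        ((Finset.univ.filter fun x : Finset (Fin n) => (∑ i ∈ x, (a i : ℝ)) ≤ C) ×ˢ
          (Finset.univ.filter fun x : Finset (Fin n) => (∑ i ∈ x, (a i : ℝ)) ≤ C)) := by
      rw [Finset.mem_product]
      exact ⟨Finset.mem_filter.mpr ⟨Finset.mem_univ _, hIr.le⟩,
        Finset.mem_filter.mpr ⟨Finset.mem_univ _, hIcr.le⟩⟩
    refine le_trans ?_ (Finset.le_sup' _ hmem)
    apply Finset.le_inf'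
    intro D hD
    rw [Finset.mem_filter] at hD
    obtain ⟨-, hD⟩ := hD
    rw [sum_profit, sum_profit]
    have hIcard : Iᶜ.card = m := by
      rw [Finset.card_compl, hcard]
      simp only [Fintype.card_fin]
      omega
    have mhalf : ((m:ℝ)) = (n:ℝ)/2 := by
      have : (n:ℝ) = m + m := by exact_mod_cast congrArg (Nat.cast (R := ℝ)) hm
      linarith
    have hsplit : (I ∩ D).card + (Iᶜ ∩ D).card = D.card := by
      have hds : D ∩ Iᶜ = D \ I := by ext j; simp [Finset.mem_sdiff]
      rw [Finset.inter_comm, Finset.inter_comm Iᶜ, hds]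
      exact Finset.card_inter_add_card_sdiff D I
    have hzero : (I ∩ D).card = 0 ∨ (Iᶜ ∩ D).card = 0 := by omega
    rcases hzero with h0 | h0
    · refine le_trans ?_ (le_max_left _ _)
      rw [h0, hcard]
      simp [mhalf]
    · refine le_trans ?_ (le_max_right _ _)
      rw [h0, hIcard]
      simp [mhalf]
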